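/- Let Z_• be a green nonlinear stability function and M a module. Among submodules M' ⊆ M with t₀(M') = t₁(M) there is a unique maximal one M₁, and M₁ contains every submodule M' ⊆ M with t₀(M') = t₁(M). -/

import Mathlib

open scoped BigOperators

noncomputable section

/-- Dot product of a real vector with a dimension vector. -/
def dprod {n : ℕ} (x : Fin n → ℝ) (v : Fin n → ℕ) : ℝ := ∑ i, x i * (v i : ℝ)

/-- Slope of a dimension vector with respect to a linear stability function
`Z(x) = a·x + i b·x`. -/
def zslope {n : ℕ} (a b : Fin n → ℝ) (v : Fin n → ℕ) : ℝ := dprod a v / dprod b v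

/-- The semistability set `D(M)` of a module `M`, with respect to a dimension-vector
assignment `d`. -/
def DSet {Λ : Type} [Ring Λ] {n : ℕ}
    (d : (N : Type) → [AddCommGroup N] → [Module Λ N] → Fin n → ℕ)
    (M : Type) [AddCommGroup M] [Module Λ M] : Set (Fin n → ℝ) :=
  {x | dprod x (d M) = 0 ∧ ∀ M' : Submodule Λ M, dprod x (d ↥M') ≤ 0}

/-- A module is Schurian if it is nonzero and every nonzero endomorphism is invertible,
i.e. its endomorphism ring is a division algebra. -/
def Schurian (Λ : Type) [Ring Λ] (M : Type) [AddCommGroup M] [Module Λ M] : Prop :=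
  (∃ y : M, y ≠ 0) ∧ ∀ f : M →ₗ[Λ] M, f ≠ 0 → Function.Bijective f

/-- `X` belongs to `E(M)`: `X` admits a finite filtration with all subquotients
isomorphic to `M`. -/
def IsFiltered (Λ : Type) [Ring Λ] (M : Type) [AddCommGroup M] [Module Λ M]
    (X : Type) [AddCommGroup X] [Module Λ X] : Prop :=
  ∃ (k : ℕ) (F : Fin (k + 1) → Submodule Λ X), Monotone F ∧ F 0 = ⊥ ∧ F (Fin.last k) = ⊤ ∧
    ∀ i : Fin k, Nonempty
      ((↥(F i.succ) ⧸ Submodule.comap (F i.succ).subtype (F i.castSucc)) ≃ₗ[Λ] M)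

/-- Slope at time `t` of a dimension vector, for a nonlinear stability function
`Z_t(x) = a_t·x + i b_t·x`. -/
def muZ {n : ℕ} (a b : ℝ → Fin n → ℝ) (t : ℝ) (v : Fin n → ℕ) : ℝ :=
  dprod (a t) v / dprod (b t) v

/-- `M` is `Z_t`-semistable: every nonzero submodule has zslope at least that of `M`. -/
def Semistable {Λ : Type} [Ring Λ] {n : ℕ}
    (d : (N : Type) → [AddCommGroup N] → [Module Λ N] → Fin n → ℕ)
    (a b : ℝ → Fin n → ℝ) (t : ℝ)
    (M : Type) [AddCommGroup M] [Module Λ M] : Prop :=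
  ∀ M' : Submodule Λ M, M' ≠ ⊥ → muZ a b t (d M) ≤ muZ a b t (d ↥M')

/-- The nonlinear stability function given by `(a, b)` is green (for `Λ`): at every
semistable pair `(N, t₀)` (with `N` a nonzero finite-length `Λ`-module, `N`
`Z_{t₀}`-semistable and `μ_{t₀}(N) = t₀`), the derivative of `t ↦ μ_t(N)` at `t₀`
is `< 1`. -/
def ZGreen {Λ : Type} [Ring Λ] {n : ℕ}
    (d : (N : Type) → [AddCommGroup N] → [Module Λ N] → Fin n → ℕ)
    (a b : ℝ → Fin n → ℝ) : Prop :=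
  ∀ (N : Type) [AddCommGroup N] [Module Λ N] [IsNoetherian Λ N] [IsArtinian Λ N] (t₀ : ℝ),
    (∃ y : N, y ≠ 0) → Semistable d a b t₀ N → muZ a b t₀ (d N) = t₀ →
      deriv (fun t => muZ a b t (d N)) t₀ < 1

/-- `t₀(M)`: the smallest `t` with `μ_t(M) = t` (as an infimum). -/
def tzero {n : ℕ} (a b : ℝ → Fin n → ℝ) (v : Fin n → ℕ) : ℝ := sInf {t | muZ a b t v = t}

lemma dprod_pos {n : ℕ} {x : Fin n → ℝ} (hx : ∀ i, 0 < x i) {v : Fin n → ℕ} (hv : v ≠ 0) :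
    0 < dprod x v := by
  obtain ⟨i, hi⟩ : ∃ i, v i ≠ 0 := by
    by_contra h; push_neg at h; exact hv (funext h)
  refine Finset.sum_pos' (fun j _ => mul_nonneg (hx j).le (Nat.cast_nonneg _)) ⟨i, Finset.mem_univ i, ?_⟩
  have : (1 : ℝ) ≤ (v i : ℝ) := by exact_mod_cast Nat.one_le_iff_ne_zero.mpr hi
  nlinarith [hx i]

lemma dprod_add {n : ℕ} (x : Fin n → ℝ) (v w : Fin n → ℕ) :
    dprod x (v + w) = dprod x v + dprod x w := by
  simp only [dprod, ← Finset.sum_add_distrib]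
  refine Finset.sum_congr rfl fun i _ => ?_
  push_cast [Pi.add_apply]
  ring

lemma tzero_spec {n : ℕ} (a b : ℝ → Fin n → ℝ)
    (hbpos : ∀ t i, 0 < b t i)
    (hCa : ∀ i, Continuous (fun t => a t i)) (hCb : ∀ i, Continuous (fun t => b t i))
    (hconst : ∃ T : ℝ, 0 < T ∧ (∀ t, T ≤ t → a t = a T ∧ b t = b T) ∧
      (∀ t, t ≤ -T → a t = a (-T) ∧ b t = b (-T)))
    (v : Fin n → ℕ) (hv : v ≠ 0) :
    muZ a b (tzero a b v) v = tzero a b v ∧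
      (∀ t ≤ tzero a b v, t ≤ muZ a b t v) ∧
      (∀ t, muZ a b t v = t → tzero a b v ≤ t) := by
  obtain ⟨T, hT, hTp, hTm⟩ := hconst
  have hB : ∀ t, 0 < dprod (b t) v := fun t => dprod_pos (hbpos t) hv
  have hcontA : Continuous fun t => dprod (a t) v :=
    continuous_finset_sum _ fun i _ => (hCa i).mul continuous_const
  have hcontB : Continuous fun t => dprod (b t) v :=
    continuous_finset_sum _ fun i _ => (hCb i).mul continuous_const
  have hcont : Continuous fun t => muZ a b t v := hcontA.div hcontB fun t => (hB t).ne'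
  set cm : ℝ := muZ a b (-T) v with hcm
  set cp : ℝ := muZ a b T v with hcp
  have hlow : ∀ t, t ≤ -T → muZ a b t v = cm := by
    intro t ht; simp only [muZ, (hTm t ht).1, (hTm t ht).2, hcm]
  have hhigh : ∀ t, T ≤ t → muZ a b t v = cp := by
    intro t ht; simp only [muZ, (hTp t ht).1, (hTp t ht).2, hcp]
  set S : Set ℝ := {t | muZ a b t v = t} with hS
  have htz : tzero a b v = sInf S := rfl
  set f : ℝ → ℝ := fun t => muZ a b t v - t with hf
  have hfc : Continuous f := hcont.sub continuous_id
  have hfpos : ∀ t, t ≤ -T → t ≤ cm - 1 → 0 < f t := by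
    intro t h1 h2
    have := hlow t h1
    simp only [hf, this]
    linarith
  -- nonempty
  have hSne : S.Nonempty := by
    set tm : ℝ := min (-T) (cm - 1) with htm
    set tp : ℝ := max T (cp + 1) with htp
    have hle : tm ≤ tp := le_trans (min_le_left _ _) (by nlinarith [le_max_left T (cp+1)])
    have h1 : 0 < f tm := hfpos _ (min_le_left _ _) (min_le_right _ _)
    have h2 : f tp < 0 := by
      have := hhigh tp (le_max_left _ _)
      simp only [hf, this]
      have := le_max_right T (cp + 1)
      linarith
    have := intermediate_value_Icc' hle hfc.continuousOn
    obtain ⟨s, _, hs⟩ := this ⟨h2.le, h1.le⟩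
    exact ⟨s, by simp only [hS, Set.mem_setOf_eq]; have h := hs; simp only [hf] at h; linarith⟩
  have hSbdd : BddBelow S := by
    refine ⟨min (-T) (cm - 1), fun s hs => ?_⟩
    by_contra h
    push_neg at h
    have h1 : s ≤ -T := le_of_lt (lt_of_lt_of_le h (min_le_left _ _))
    have h2 : s ≤ cm - 1 := le_of_lt (lt_of_lt_of_le h (min_le_right _ _))
    have := hfpos s h1 h2
    have : muZ a b s v = s := hs
    simp only [hf] at *
    linarith [hfpos s h1 h2]
  have hSclosed : IsClosed S := isClosed_eq hcont continuous_id
  have hmem : sInf S ∈ S := hSclosed.csInf_mem hSne hSbdd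
  refine ⟨by rw [htz]; exact hmem, ?_, fun t ht => by rw [htz]; exact csInf_le hSbdd ht⟩
  intro t ht
  rcases eq_or_lt_of_le ht with rfl | hlt
  · rw [htz] at *; exact le_of_eq hmem.symm
  · rw [htz] at hlt
    by_contra hcon
    push_neg at hcon
    have hft : f t < 0 := by simp only [hf]; linarith
    set t' : ℝ := min (t - 1) (min (-T) (cm - 1)) with ht'
    have h1 : 0 < f t' :=
      hfpos _ (le_trans (min_le_right _ _) (min_le_left _ _))
        (le_trans (min_le_right _ _) (min_le_right _ _))
    have hle : t' ≤ t := le_trans (min_le_left _ _) (by linarith)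
    obtain ⟨s, hsmem, hs⟩ := intermediate_value_Icc' hle hfc.continuousOn ⟨hft.le, h1.le⟩
    have hsS : s ∈ S := by simp only [hS, Set.mem_setOf_eq]; have h := hs; simp only [hf] at h; linarith
    have := csInf_le hSbdd hsS
    have : s ≤ t := hsmem.2
    linarith [csInf_le hSbdd hsS, hsmem.2]

/-- `t₁(M)`: the smallest value of `t₀(M')` over nonzero submodules `M' ⊆ M`. -/
def tone {Λ : Type} [Ring Λ] {n : ℕ}
    (d : (N : Type) → [AddCommGroup N] → [Module Λ N] → Fin n → ℕ)
    (a b : ℝ → Fin n → ℝ)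
    (M : Type) [AddCommGroup M] [Module Λ M] : ℝ :=
  sInf {s : ℝ | ∃ M' : Submodule Λ M, M' ≠ ⊥ ∧ s = tzero a b (d ↥M')}

/-- For a green nonlinear stability function and a module `M`, among the
nonzero submodules `M' ⊆ M` with `t₀(M') = t₁(M)` there is a unique maximal one `M₁`,
and `M₁` contains every nonzero submodule `M' ⊆ M` with `t₀(M') = t₁(M)`. -/
theorem stmt13 (Λ : Type) [Ring Λ] {n : ℕ}
    (d : (N : Type) → [AddCommGroup N] → [Module Λ N] → Fin n → ℕ)
    (hiso : ∀ (N N' : Type) [AddCommGroup N] [Module Λ N] [AddCommGroup N'] [Module Λ N']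
      [IsNoetherian Λ N] [IsArtinian Λ N], (N ≃ₗ[Λ] N') → d N = d N')
    (hadd : ∀ (N : Type) [AddCommGroup N] [Module Λ N] [IsNoetherian Λ N] [IsArtinian Λ N]
      (A : Submodule Λ N), d ↥A + d (N ⧸ A) = d N)
    (hzero : ∀ (N : Type) [AddCommGroup N] [Module Λ N] [IsNoetherian Λ N] [IsArtinian Λ N],
      (d N = 0 ↔ ∀ y : N, y = 0))
    (a b : ℝ → Fin n → ℝ)
    (hbpos : ∀ t i, 0 < b t i)
    (hC1a : ∀ i, ContDiff ℝ 1 (fun t => a t i))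
    (hC1b : ∀ i, ContDiff ℝ 1 (fun t => b t i))
    (hconst : ∃ T : ℝ, 0 < T ∧ (∀ t, T ≤ t → a t = a T ∧ b t = b T) ∧
      (∀ t, t ≤ -T → a t = a (-T) ∧ b t = b (-T)))
    (hgreen : ZGreen d a b)
    (M : Type) [AddCommGroup M] [Module Λ M] [IsNoetherian Λ M] [IsArtinian Λ M]
    (hM0 : ∃ y : M, y ≠ 0) :
    ∃ M₁ : Submodule Λ M, M₁ ≠ ⊥ ∧ tzero a b (d ↥M₁) = tone d a b M ∧
      ∀ N : Submodule Λ M, N ≠ ⊥ → tzero a b (d ↥N) = tone d a b M → N ≤ M₁ := by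
  classical
  have hCa : ∀ i, Continuous fun t => a t i := fun i => (hC1a i).continuous
  have hCb : ∀ i, Continuous fun t => b t i := fun i => (hC1b i).continuous
  have hdne : ∀ N : Submodule Λ M, N ≠ ⊥ → d ↥N ≠ 0 := by
    intro N hN h0
    apply hN
    rw [Submodule.eq_bot_iff]
    intro x hx
    have := (hzero ↥N).mp h0 ⟨x, hx⟩
    exact Subtype.ext_iff.mp this
  have spec : ∀ N : Submodule Λ M, N ≠ ⊥ →
      muZ a b (tzero a b (d ↥N)) (d ↥N) = tzero a b (d ↥N) ∧
      (∀ t ≤ tzero a b (d ↥N), t ≤ muZ a b t (d ↥N)) ∧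
      (∀ t, muZ a b t (d ↥N) = t → tzero a b (d ↥N) ≤ t) :=
    fun N hN => tzero_spec a b hbpos hCa hCb hconst _ (hdne N hN)
  have hdle : ∀ N : Submodule Λ M, ∀ i, d ↥N i ≤ d M i := by
    intro N i
    have h := congrFun (hadd M N) i
    simp only [Pi.add_apply] at h
    omega
  set t₁ := tone d a b M with ht₁
  set Sv : Set ℝ := {s | ∃ M' : Submodule Λ M, M' ≠ ⊥ ∧ s = tzero a b (d ↥M')} with hSv
  have htop : (⊤ : Submodule Λ M) ≠ ⊥ := by
    obtain ⟨y, hy⟩ := hM0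
    intro h
    have : y ∈ (⊥ : Submodule Λ M) := h ▸ Submodule.mem_top
    exact hy (by simpa using this)
  have hne : Sv.Nonempty := ⟨_, ⊤, htop, rfl⟩
  have hfin : Sv.Finite := by
    have hsub : Sv ⊆ (fun v => tzero a b v) '' {v : Fin n → ℕ | ∀ i, v i ≤ d M i} := by
      rintro s ⟨N, hN, rfl⟩; exact ⟨d ↥N, fun i => hdle N i, rfl⟩
    refine Set.Finite.subset (Set.Finite.image _ ?_) hsub
    have hsub2 : {v : Fin n → ℕ | ∀ i, v i ≤ d M i} ⊆
        Set.pi Set.univ (fun i => Set.Iic (d M i)) := by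
      intro v hv
      rw [Set.mem_pi]
      intro i _
      exact hv i
    exact Set.Finite.subset (Set.Finite.pi fun i => Set.finite_Iic _) hsub2
  have htone_mem : t₁ ∈ Sv := by
    rw [ht₁, tone]; exact hne.csInf_mem hfin
  obtain ⟨M'', hM''ne, hM''⟩ := htone_mem
  have hbdd : BddBelow Sv := hfin.bddBelow
  have hmin : ∀ N : Submodule Λ M, N ≠ ⊥ → t₁ ≤ tzero a b (d ↥N) := by
    intro N hN
    rw [ht₁, tone]
    exact csInf_le hbdd ⟨N, hN, rfl⟩
  set φ : (Fin n → ℕ) → ℝ := fun v => dprod (a t₁) v - t₁ * dprod (b t₁) v with hφ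
  have hφadd : ∀ v w, φ (v + w) = φ v + φ w := by
    intro v w; simp only [hφ, dprod_add]; ring
  have hBpos : ∀ N : Submodule Λ M, N ≠ ⊥ → 0 < dprod (b t₁) (d ↥N) :=
    fun N hN => dprod_pos (hbpos t₁) (hdne N hN)
  have key1 : ∀ N : Submodule Λ M, N ≠ ⊥ → 0 ≤ φ (d ↥N) := by
    intro N hN
    have h := (spec N hN).2.1 t₁ (hmin N hN)
    have hb := hBpos N hN
    rw [muZ, le_div_iff₀ hb] at h
    simp only [hφ]
    linarith
  have key2 : ∀ N : Submodule Λ M, N ≠ ⊥ → (φ (d ↥N) = 0 ↔ tzero a b (d ↥N) = t₁) := by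
    intro N hN
    have hb := hBpos N hN
    constructor
    · intro h0
      have hmu : muZ a b t₁ (d ↥N) = t₁ := by
        rw [muZ, div_eq_iff hb.ne']
        simp only [hφ] at h0; linarith
      exact le_antisymm ((spec N hN).2.2 t₁ hmu) (hmin N hN)
    · intro heq
      have h := (spec N hN).1
      rw [heq, muZ, div_eq_iff hb.ne'] at h
      simp only [hφ]; linarith
  have hφbot : φ (d ↥(⊥ : Submodule Λ M)) = 0 := by
    have hz : d ↥(⊥ : Submodule Λ M) = 0 :=
      (hzero _).mpr (fun y => Subtype.ext ((Submodule.mem_bot Λ).mp y.2))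
    rw [hz]; simp [hφ, dprod]
  have hφnn : ∀ N : Submodule Λ M, 0 ≤ φ (d ↥N) := by
    intro N
    by_cases hN : N = ⊥
    · subst hN; rw [hφbot]
    · exact key1 N hN
  have hsup : ∀ p q : Submodule Λ M, d ↥(p ⊔ q) + d ↥(p ⊓ q) = d ↥p + d ↥q := by
    intro p q
    have h1 := hadd ↥(p ⊔ q) (Submodule.comap (p ⊔ q).subtype q)
    have h2 := hiso _ _ (Submodule.comapSubtypeEquivOfLe (le_sup_right : q ≤ p ⊔ q))
    have h3 := hadd ↥p (Submodule.comap p.subtype (p ⊓ q))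
    have h4 := hiso _ _ (Submodule.comapSubtypeEquivOfLe (inf_le_left : p ⊓ q ≤ p))
    have h5 := hiso _ _ (LinearMap.quotientInfEquivSupQuotient p q)
    rw [← Submodule.comap_inf] at h5
    rw [h2, ← h5] at h1
    rw [h4] at h3
    funext i
    have e1 := congrFun h1 i
    have e3 := congrFun h3 i
    simp only [Pi.add_apply] at e1 e3 ⊢
    omega
  have hsupφ : ∀ p q : Submodule Λ M, p ≠ ⊥ → φ (d ↥p) = 0 → φ (d ↥q) = 0 →
      φ (d ↥(p ⊔ q)) = 0 := by
    intro p q hp h1 h2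
    have h := congrArg φ (hsup p q)
    rw [hφadd, hφadd] at h
    have hnn1 := hφnn (p ⊓ q)
    have hnn2 : 0 ≤ φ (d ↥(p ⊔ q)) := key1 (p ⊔ q) (by
      intro h'
      exact hp (le_bot_iff.mp (h' ▸ (le_sup_left : p ≤ p ⊔ q))))
    linarith
  set Sset : Set (Submodule Λ M) := {N | N ≠ ⊥ ∧ φ (d ↥N) = 0} with hSset
  have hSsetne : Sset.Nonempty := ⟨M'', hM''ne, (key2 M'' hM''ne).mpr hM''.symm⟩
  obtain ⟨M₁, hM₁mem, hmax⟩ := (set_has_maximal_iff_noetherian.mpr inferInstance) Sset hSsetne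
  refine ⟨M₁, hM₁mem.1, (key2 M₁ hM₁mem.1).mp hM₁mem.2, ?_⟩
  intro N hN htzN
  have hmem : N ⊔ M₁ ∈ Sset := by
    refine ⟨?_, hsupφ N M₁ hN ((key2 N hN).mpr htzN) hM₁mem.2⟩
    intro h'
    exact hN (le_bot_iff.mp (h' ▸ (le_sup_left : N ≤ N ⊔ M₁)))
  have hle : M₁ ≤ N ⊔ M₁ := le_sup_right
  have hnlt : ¬ M₁ < N ⊔ M₁ := hmax _ hmem
  have heq : M₁ = N ⊔ M₁ := hle.lt_or_eq.resolve_left hnlt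
  exact le_trans (le_sup_left : N ≤ N ⊔ M₁) heq.ge
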